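/- Fix α ∈ [0, 2]. Then the series θ(x) = Σ_{n ∈ ℤ} θ_n(x) converges absolutely for every x ∈ ℝ, and sup_{x ∈ ℝ} |θ(x) − θ_{n_x}(x)| < ∞. -/

import Mathlib

open MeasureTheory intervalIntegral

/-- The integer closest to `x`, taking the smaller one when `x` is a half-integer. -/
noncomputable def nearestInt (x : ℝ) : ℤ := ⌈x - 1 / 2⌉

/-- The summand `θ_n(x)`. -/
noncomputable def thetaN (α : ℝ) (n : ℤ) (x : ℝ) : ℝ :=
  if n = 0 then
    (1 / Real.pi) * ∫ t in (-(5/4) : ℝ)..(5/4 : ℝ),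
      (Real.arctan (t + x) - Real.arctan x) / t
  else
    (1 / Real.pi) * ∫ t in (-(5/4) : ℝ)..(5/4 : ℝ),
      (Real.arctan (|(n : ℝ)| ^ α * (t + x - (n : ℝ))) -
        Real.arctan (|(n : ℝ)| ^ α * (x - (n : ℝ)))) / t

lemma my_abs_arctan_le (z : ℝ) : |Real.arctan z| ≤ |z| := by
  rcases le_or_gt 0 z with hz | hz
  · have h0 : 0 ≤ Real.arctan z := by
      simpa using Real.arctan_strictMono.monotone hz
    have h := Real.le_tan h0 (Real.arctan_lt_pi_div_two z)
    rw [Real.tan_arctan] at h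
    rw [abs_of_nonneg h0, abs_of_nonneg hz]; exact h
  · have h0 : Real.arctan z ≤ 0 := by
      simpa using Real.arctan_strictMono.monotone hz.le
    have h0' : 0 ≤ Real.arctan (-z) := by
      simpa using Real.arctan_strictMono.monotone (neg_nonneg.mpr hz.le)
    have h := Real.le_tan h0' (Real.arctan_lt_pi_div_two (-z))
    rw [Real.tan_arctan] at h
    rw [abs_of_nonpos h0, abs_of_neg hz, ← Real.arctan_neg]
    exact h

lemma my_abs_arctan_le_pi_div_two (z : ℝ) : |Real.arctan z| ≤ Real.pi / 2 := by
  have h := Real.arctan_mem_Ioo z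
  exact abs_le.mpr ⟨h.1.le, h.2.le⟩

lemma my_ptwise (a y t : ℝ) (ha : 1 ≤ a) (hy : 1/2 ≤ |y|) (ht : |t| ≤ 5/4) :
    |(Real.arctan (a*(t+y)) - Real.arctan (a*y)) / t| ≤ 5*Real.pi/y^2 := by
  have hy0 : y ≠ 0 := by
    intro h; rw [h] at hy; simp at hy; linarith
  have hy2 : 0 < y ^ 2 := by positivity
  have hπ : (3:ℝ) < Real.pi := Real.pi_gt_three
  rcases eq_or_ne t 0 with rfl | ht0
  · simp only [zero_add, sub_self, zero_div, abs_zero]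
    positivity
  have htpos : 0 < |t| := abs_pos.mpr ht0
  rw [abs_div]
  by_cases hcase : |t| ≤ |y|/2
  · -- same-sign regime: use the arctan subtraction formula
    have h1 : |y*t| ≤ y^2/2 := by
      rw [abs_mul]
      calc |y| * |t| ≤ |y| * (|y| / 2) := by gcongr
        _ = y^2/2 := by rw [← sq_abs]; ring
    have hyt : y^2/2 ≤ y*(t+y) := by
      have := neg_abs_le (y*t)
      nlinarith
    have hAB : a^2*(y^2/2) ≤ (a*(t+y))*(a*y) := by
      have h2 := mul_le_mul_of_nonneg_left hyt (sq_nonneg a)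
      nlinarith
    have hABnn : (0:ℝ) ≤ (a*(t+y))*(a*y) := le_trans (by positivity) hAB
    have hden : 0 < 1 + (a*(t+y))*(a*y) := by linarith
    have hlt : (a*(t+y)) * (-(a*y)) < 1 := by nlinarith
    have key := Real.arctan_add hlt
    rw [Real.arctan_neg] at key
    have keq : Real.arctan (a*(t+y)) - Real.arctan (a*y) =
        Real.arctan ((a*(t+y) - a*y)/(1 + (a*(t+y))*(a*y))) := by
      rw [sub_eq_add_neg, key]
      congr 1
      rw [mul_neg, sub_neg_eq_add, sub_eq_add_neg]
    rw [keq]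
    have hz := my_abs_arctan_le ((a*(t+y) - a*y)/(1 + (a*(t+y))*(a*y)))
    have habs : |(a*(t+y) - a*y)/(1 + (a*(t+y))*(a*y))| =
        (a*|t|)/(1 + (a*(t+y))*(a*y)) := by
      rw [abs_div, abs_of_pos hden]
      congr 1
      have : a*(t+y) - a*y = a*t := by ring
      rw [this, abs_mul, abs_of_nonneg (by linarith : (0:ℝ) ≤ a)]
    calc |Real.arctan ((a*(t+y) - a*y)/(1 + (a*(t+y))*(a*y)))| / |t|
        ≤ ((a*|t|)/(1 + (a*(t+y))*(a*y))) / |t| := by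
          rw [← habs]; gcongr
      _ = a/(1 + (a*(t+y))*(a*y)) := by
          field_simp
      _ ≤ 5*Real.pi/y^2 := by
          rw [div_le_div_iff₀ hden hy2]
          have h5 : a ≤ a^2 := by nlinarith
          nlinarith [mul_le_mul_of_nonneg_right h5 (le_of_lt hy2),
            mul_le_mul_of_nonneg_left hAB (by linarith : (0:ℝ) ≤ 5*Real.pi)]
  · -- |t| large regime: crude bound
    push_neg at hcase
    have habs : |Real.arctan (a*(t+y)) - Real.arctan (a*y)| ≤ Real.pi := by
      have h1 := my_abs_arctan_le_pi_div_two (a*(t+y))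
      have h2 := my_abs_arctan_le_pi_div_two (a*y)
      have h3 := abs_add_le (Real.arctan (a*(t+y))) (-(Real.arctan (a*y)))
      rw [← sub_eq_add_neg, abs_neg] at h3
      linarith
    rw [div_le_div_iff₀ htpos hy2]
    have hyle : |y| ≤ 5/2 := by linarith
    have hsq : y^2 ≤ 5*|t| := by
      have : |y| * |y| ≤ (5/2)*(2*|t|) := by
        apply mul_le_mul hyle (by linarith) (abs_nonneg y) (by norm_num)
      rw [← sq_abs]; nlinarith
    nlinarith [abs_nonneg (Real.arctan (a*(t+y)) - Real.arctan (a*y)),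
      mul_le_mul habs hsq (le_of_lt hy2) (by linarith : (0:ℝ) ≤ Real.pi)]

lemma my_core (a y : ℝ) (ha : 1 ≤ a) (hy : 1/2 ≤ |y|) :
    |(1/Real.pi) * ∫ t in (-(5/4) : ℝ)..(5/4 : ℝ),
      (Real.arctan (a*(t+y)) - Real.arctan (a*y)) / t| ≤ 13/y^2 := by
  have hy0 : y ≠ 0 := by
    intro h; rw [h] at hy; simp at hy; linarith
  have hy2 : 0 < y ^ 2 := by positivity
  have hπ : (0:ℝ) < Real.pi := Real.pi_pos
  have hb : ‖∫ t in (-(5/4) : ℝ)..(5/4 : ℝ),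
      (Real.arctan (a*(t+y)) - Real.arctan (a*y)) / t‖ ≤
      (5*Real.pi/y^2) * |(5/4 : ℝ) - (-(5/4))| := by
    apply intervalIntegral.norm_integral_le_of_norm_le_const
    intro t htmem
    rw [Set.uIoc_of_le (by norm_num : (-(5/4):ℝ) ≤ 5/4)] at htmem
    have ht : |t| ≤ 5/4 := abs_le.mpr ⟨htmem.1.le, htmem.2⟩
    rw [Real.norm_eq_abs]
    exact my_ptwise a y t ha hy ht
  rw [Real.norm_eq_abs] at hb
  have habs54 : |(5/4 : ℝ) - (-(5/4))| = 5/2 := by norm_num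
  rw [habs54] at hb
  rw [abs_mul, abs_of_pos (by positivity : (0:ℝ) < 1/Real.pi)]
  calc (1/Real.pi) * |∫ t in (-(5/4) : ℝ)..(5/4 : ℝ),
        (Real.arctan (a*(t+y)) - Real.arctan (a*y)) / t|
      ≤ (1/Real.pi) * ((5*Real.pi/y^2) * (5/2)) := by gcongr
    _ = 25/(2*y^2) := by field_simp; ring
    _ ≤ 13/y^2 := by
        rw [div_le_div_iff₀ (by positivity) hy2]; nlinarith

lemma my_theta_bound (α : ℝ) (hα : 0 ≤ α) (n : ℤ) (x : ℝ)
    (h : 1/2 ≤ |x - (n:ℝ)|) : |thetaN α n x| ≤ 13/(x - (n:ℝ))^2 := by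
  unfold thetaN
  split_ifs with h0
  · subst h0
    simp only [Int.cast_zero, sub_zero] at h ⊢
    have := my_core 1 x le_rfl h
    simpa using this
  · have hn1 : (1:ℝ) ≤ |(n:ℝ)| := by
      have : (1:ℤ) ≤ |n| := Int.one_le_abs h0
      calc (1:ℝ) ≤ ((|n| : ℤ) : ℝ) := by exact_mod_cast this
        _ = |(n:ℝ)| := by push_cast; rfl
    have ha : 1 ≤ |(n:ℝ)|^α := Real.one_le_rpow hn1 hα
    have := my_core (|(n:ℝ)|^α) (x - (n:ℝ)) ha h
    simpa only [add_sub_assoc] using this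

lemma my_nearest_lb {x : ℝ} {n : ℤ} (hn : n ≠ nearestInt x) :
    1/2 ≤ |x - (n:ℝ)| := by
  have h1 : x - 1/2 ≤ ((nearestInt x : ℤ) : ℝ) := Int.le_ceil _
  have h2 : ((nearestInt x : ℤ) : ℝ) < (x - 1/2) + 1 := Int.ceil_lt_add_one _
  rcases hn.lt_or_gt with hlt | hlt
  · have : (n:ℝ) ≤ ((nearestInt x : ℤ) : ℝ) - 1 := by
      have : n ≤ nearestInt x - 1 := by omega
      exact_mod_cast this
    rw [le_abs]; left; linarith
  · have : ((nearestInt x : ℤ) : ℝ) + 1 ≤ (n:ℝ) := by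
      have : nearestInt x + 1 ≤ n := by omega
      exact_mod_cast this
    rw [le_abs]; right; linarith

lemma my_nearest_ub (x : ℝ) : |x - ((nearestInt x : ℤ) : ℝ)| ≤ 1/2 := by
  have h1 : x - 1/2 ≤ ((nearestInt x : ℤ) : ℝ) := Int.le_ceil _
  have h2 : ((nearestInt x : ℤ) : ℝ) < (x - 1/2) + 1 := Int.ceil_lt_add_one _
  rw [abs_le]; constructor <;> linarith

lemma my_key2 (x : ℝ) (n : ℤ) (hn : n ≠ nearestInt x) :
    13/(x - (n:ℝ))^2 ≤ 52/(((n - nearestInt x : ℤ)):ℝ)^2 := by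
  have h1 : (1:ℝ) ≤ |((n - nearestInt x : ℤ):ℝ)| := by
    have : (1:ℤ) ≤ |n - nearestInt x| := Int.one_le_abs (sub_ne_zero.mpr hn)
    calc (1:ℝ) ≤ ((|n - nearestInt x| : ℤ) : ℝ) := by exact_mod_cast this
      _ = |((n - nearestInt x : ℤ):ℝ)| := by push_cast; rfl
  have h2 : |x - ((nearestInt x : ℤ) : ℝ)| ≤ 1/2 := my_nearest_ub x
  have hxn : 1/2 ≤ |x - (n:ℝ)| := my_nearest_lb hn
  have hcast : ((n - nearestInt x : ℤ):ℝ) = (n:ℝ) - ((nearestInt x : ℤ):ℝ) := by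
    push_cast; ring
  have htri : |((n - nearestInt x : ℤ):ℝ)| ≤ |x - (n:ℝ)| + |x - ((nearestInt x : ℤ):ℝ)| := by
    rw [hcast]
    calc |(n:ℝ) - ((nearestInt x : ℤ):ℝ)|
        = |(-(x - (n:ℝ))) + (x - ((nearestInt x : ℤ):ℝ))| := by ring_nf
      _ ≤ |(-(x - (n:ℝ)))| + |x - ((nearestInt x : ℤ):ℝ)| := abs_add_le _ _
      _ = |x - (n:ℝ)| + |x - ((nearestInt x : ℤ):ℝ)| := by rw [abs_neg]
  have hhalf : |((n - nearestInt x : ℤ):ℝ)| / 2 ≤ |x - (n:ℝ)| := by linarith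
  have hpos1 : (0:ℝ) < (x - (n:ℝ))^2 := by
    have h0 : x - (n:ℝ) ≠ 0 := abs_pos.mp (by linarith)
    positivity
  have hpos2 : (0:ℝ) < (((n - nearestInt x : ℤ)):ℝ)^2 := by
    have : (0:ℝ) < |((n - nearestInt x : ℤ):ℝ)| := by linarith
    have h0 : ((n - nearestInt x : ℤ):ℝ) ≠ 0 := by
      intro h; rw [h] at this; simp at this
    positivity
  rw [div_le_div_iff₀ hpos1 hpos2]
  nlinarith [sq_abs (x - (n:ℝ)), sq_abs (((n - nearestInt x : ℤ)):ℝ),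
    mul_self_nonneg (|((n - nearestInt x : ℤ):ℝ)| - 2*|x - (n:ℝ)|),
    abs_nonneg (((n - nearestInt x : ℤ)):ℝ), abs_nonneg (x - (n:ℝ))]

theorem stmt_16 (α : ℝ) (hα : α ∈ Set.Icc (0:ℝ) 2) :
    (∀ x : ℝ, Summable (fun n : ℤ => |thetaN α n x|)) ∧
    ∃ C : ℝ, ∀ x : ℝ,
      |(∑' n : ℤ, thetaN α n x) - thetaN α (nearestInt x) x| ≤ C := by
  classical
  obtain ⟨hα0, -⟩ := hα
  have hS : Summable (fun k : ℤ => 52/(k:ℝ)^2) := by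
    have h1 : Summable (fun k : ℤ => 1/(k:ℝ)^2) :=
      (Real.summable_one_div_int_pow (p := 2)).mpr one_lt_two
    have := h1.mul_left 52
    simpa [mul_one_div, div_eq_mul_inv] using this
  have hg : ∀ m : ℤ, Summable (fun n : ℤ => 52/(((n - m : ℤ)):ℝ)^2) := by
    intro m
    have := ((Equiv.subRight m).summable_iff (f := fun k : ℤ => 52/(k:ℝ)^2)).mpr hS
    simpa [Function.comp_def, Equiv.subRight_apply, Int.cast_sub] using this
  have main : ∀ x : ℝ, Summable (fun n : ℤ => |thetaN α n x|) := by
    intro x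
    apply (summable_subtype_and_compl (s := ({nearestInt x} : Set ℤ))).mp
    constructor
    · have : Finite ({nearestInt x} : Set ℤ) := Set.finite_singleton _
      exact Summable.of_finite
    · apply Summable.of_nonneg_of_le (fun b => abs_nonneg _) (fun b => ?_)
        ((hg (nearestInt x)).subtype _)
      have hb : (b : ℤ) ≠ nearestInt x := by
        intro hEq
        exact b.2 (by simp [hEq])
      exact (my_theta_bound α hα0 b x (my_nearest_lb hb)).trans (my_key2 x b hb)
  refine ⟨main, ⟨∑' k : ℤ, 52/(k:ℝ)^2, ?_⟩⟩
  intro x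
  have hsum := main x
  have hf : Summable (fun n : ℤ => thetaN α n x) := hsum.of_abs
  rw [hf.tsum_eq_add_tsum_ite (nearestInt x), add_sub_cancel_left]
  have hgsum : HasSum (fun n : ℤ => 52/(((n - nearestInt x : ℤ)):ℝ)^2)
      (∑' k : ℤ, 52/(k:ℝ)^2) := by
    have := ((Equiv.subRight (nearestInt x)).hasSum_iff
      (f := fun k : ℤ => 52/(k:ℝ)^2)).mpr hS.hasSum
    simpa [Function.comp_def, Equiv.subRight_apply, Int.cast_sub] using this
  have hptw : ∀ n : ℤ, ‖if n = nearestInt x then 0 else thetaN α n x‖ ≤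
      52/(((n - nearestInt x : ℤ)):ℝ)^2 := by
    intro n
    by_cases h : n = nearestInt x
    · simp [h]
    · rw [if_neg h, Real.norm_eq_abs]
      exact (my_theta_bound α hα0 n x (my_nearest_lb h)).trans (my_key2 x n h)
  have := tsum_of_norm_bounded hgsum hptw
  simpa [Real.norm_eq_abs] using this
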